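/- If R is a forcing set of a graph G, then each vertex of G can force at most one vertex during the entire forcing process; consequently the set of forces partitions V(G) into |R| forcing chains, each of which induces a path in G with its initial vertex in R. -/

import Mathlib

open SimpleGraph

/-- A vertex is (eventually) colored in the forcing process starting from `S`:
either it is in `S`, or some colored vertex `u` adjacent to it has all of its
other neighbors colored, so `u` forces it. -/
inductive SimpleGraph.Forced {V : Type*} (G : SimpleGraph V) (S : Set V) : V → Prop
  | init {v : V} (hv : v ∈ S) : G.Forced S v
  | force {u w : V} (hu : G.Forced S u) (hadj : G.Adj u w)
      (hothers : ∀ x, G.Adj u x → x ≠ w → G.Forced S x) : G.Forced S w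

/-- `S` is a (zero) forcing set of `G`. -/
def SimpleGraph.IsForcingSet {V : Type*} (G : SimpleGraph V) (S : Set V) : Prop :=
  ∀ v, G.Forced S v

/-- `S` is a connected forcing set of `G`. -/
def SimpleGraph.IsConnForcingSet {V : Type*} (G : SimpleGraph V) (S : Set V) : Prop :=
  G.IsForcingSet S ∧ (G.induce S).Connected

/-- The (zero) forcing number `F(G)`. -/
noncomputable def SimpleGraph.zfNum {V : Type*} (G : SimpleGraph V) : ℕ :=
  sInf {n | ∃ S : Set V, S.ncard = n ∧ G.IsForcingSet S}

/-- The connected forcing number `F_c(G)`. -/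
noncomputable def SimpleGraph.czfNum {V : Type*} (G : SimpleGraph V) : ℕ :=
  sInf {n | ∃ S : Set V, S.ncard = n ∧ G.IsConnForcingSet S}

/-- `G` is a path graph. -/
def SimpleGraph.IsPathGraph {V : Type*} (G : SimpleGraph V) : Prop :=
  ∃ n : ℕ, Nonempty (G ≃g SimpleGraph.pathGraph n)

/-- Deletion of a vertex. -/
def SimpleGraph.delVert {V : Type*} (G : SimpleGraph V) (v : V) :
    SimpleGraph {w : V // w ≠ v} :=
  G.induce {w : V | w ≠ v}

/-- `v` is a leaf (degree-1 vertex) of `G`. -/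
def SimpleGraph.IsLeaf {V : Type*} (G : SimpleGraph V) (v : V) : Prop :=
  (G.neighborSet v).ncard = 1

/-- `ValidForcingSeq G S L` says that the chronological list of forces `L`
(`(u, w)` meaning "`u` forces `w`") is a valid run of the forcing process
starting from the colored set `S`. -/
def ValidForcingSeq {V : Type*} (G : SimpleGraph V) : Set V → List (V × V) → Prop
  | _, [] => True
  | S, (u, w) :: rest =>
      u ∈ S ∧ w ∉ S ∧ G.Adj u w ∧ (∀ x, G.Adj u x → x ≠ w → x ∈ S) ∧
        ValidForcingSeq G (insert w S) rest

lemma vfs_snd_not_mem {V : Type*} {G : SimpleGraph V} :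
    ∀ {L : List (V × V)} {S : Set V}, ValidForcingSeq G S L → ∀ p ∈ L, p.2 ∉ S := by
  intro L
  induction L with
  | nil => intro S _ p hp; simp at hp
  | cons a rest ih =>
    obtain ⟨u, w⟩ := a
    intro S hv p hp
    obtain ⟨hu, hw, hadj, hoth, hrest⟩ := hv
    rcases List.mem_cons.1 hp with hp | hp
    · cases hp; exact hw
    · intro hpS
      exact ih hrest p hp (Set.mem_insert_iff.2 (Or.inr hpS))

lemma vfs_fst_ne {V : Type*} {G : SimpleGraph V} {u : V} :
    ∀ {L : List (V × V)} {S : Set V}, ValidForcingSeq G S L →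
      (∀ x, G.Adj u x → x ∈ S) → ∀ p ∈ L, p.1 ≠ u := by
  intro L
  induction L with
  | nil => intro S _ _ p hp; simp at hp
  | cons a rest ih =>
    obtain ⟨a1, a2⟩ := a
    intro S hv hN p hp
    obtain ⟨hu, hw, hadj, hoth, hrest⟩ := hv
    rcases List.mem_cons.1 hp with hp | hp
    · cases hp
      intro h; subst h
      exact hw (hN _ hadj)
    · exact ih hrest (fun x hx => Set.mem_insert_iff.2 (Or.inr (hN x hx))) p hp

lemma vfs_fst_nodup {V : Type*} {G : SimpleGraph V} :
    ∀ {L : List (V × V)} {S : Set V}, ValidForcingSeq G S L → (L.map Prod.fst).Nodup := by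
  intro L
  induction L with
  | nil => intro S _; simp
  | cons a rest ih =>
    obtain ⟨u, w⟩ := a
    intro S hv
    obtain ⟨hu, hw, hadj, hoth, hrest⟩ := hv
    simp only [List.map_cons, List.nodup_cons]
    refine ⟨?_, ih hrest⟩
    intro hmem
    obtain ⟨p, hp, hpu⟩ := List.mem_map.1 hmem
    have hN : ∀ x, G.Adj u x → x ∈ insert w S := by
      intro x hx
      by_cases hxw : x = w
      · exact hxw ▸ Set.mem_insert _ _
      · exact Set.mem_insert_iff.2 (Or.inr (hoth x hx hxw))
    exact vfs_fst_ne hrest hN p hp hpu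

lemma chain'_mem {α : Type*} {rel : α → α → Prop} :
    ∀ {l : List α}, List.Chain' rel l → ∀ b ∈ l, b ∈ l.head? ∨ ∃ a, rel a b := by
  intro l
  induction l with
  | nil => simp
  | cons x t ih =>
    intro hc b hb
    rcases List.mem_cons.1 hb with hb | hb
    · left; simp [hb]
    · cases t with
      | nil => simp at hb
      | cons y t' =>
        rcases ih hc.tail b hb with h | h
        · simp only [List.head?_cons, Option.mem_some_iff] at h
          right; exact ⟨x, h ▸ hc.rel_head⟩
        · right; exact h


/-- `l` lists vertices of an induced path of `G`, in order. -/
def IsIP {V : Type*} (G : SimpleGraph V) (l : List V) : Prop :=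
  l.Nodup ∧ ∀ i j : Fin l.length,
    (G.Adj (l.get i) (l.get j) ↔ ((i : ℕ) + 1 = (j : ℕ) ∨ (j : ℕ) + 1 = (i : ℕ)))

lemma isIP_singleton {V : Type*} (G : SimpleGraph V) (r : V) : IsIP G [r] := by
  refine ⟨by simp, ?_⟩
  intro i j
  have h1 := i.isLt
  have h2 := j.isLt
  simp only [List.length_singleton] at h1 h2
  have hij : i = j := Fin.ext (by omega)
  subst hij
  exact iff_of_false (G.irrefl) (by omega)

lemma IsIP.cons {V : Type*} {G : SimpleGraph V} {u w : V} {t : List V}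
    (h : IsIP G (w :: t)) (hu : u ∉ w :: t) (hadj : G.Adj u w)
    (hnadj : ∀ x ∈ t, ¬ G.Adj u x) : IsIP G (u :: w :: t) := by
  obtain ⟨hnd, hiff⟩ := h
  refine ⟨List.nodup_cons.2 ⟨hu, hnd⟩, ?_⟩
  have hval : ∀ (n k : ℕ) (h : k < n), ((⟨k, h⟩ : Fin n) : ℕ) = k := fun _ _ _ => rfl
  intro i j
  obtain ⟨i, hi⟩ := i
  obtain ⟨j, hj⟩ := j
  have hi' := hi
  have hj' := hj
  simp only [List.length_cons] at hi' hj'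
  simp only [hval]
  rcases i with _ | i
  · rcases j with _ | j
    · exact iff_of_false (G.irrefl) (by omega)
    · rcases j with _ | j
      · exact iff_of_true hadj (by omega)
      · refine iff_of_false ?_ (by omega)
        exact hnadj _ (List.get_mem t ⟨j, by omega⟩)
  · rcases j with _ | j
    · rcases i with _ | i
      · exact iff_of_true hadj.symm (by omega)
      · refine iff_of_false ?_ (by omega)
        exact fun hA => hnadj _ (List.get_mem t ⟨i, by omega⟩) hA.symm
    · have key := hiff ⟨i, by simpa using hi'⟩ ⟨j, by simpa using hj'⟩
      simp only [hval] at key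
      exact key.trans (by omega)

lemma IsIP.isPathGraph {V : Type*} {G : SimpleGraph V} {l : List V} (h : IsIP G l) :
    (G.induce {x : V | x ∈ l}).IsPathGraph := by
  classical
  obtain ⟨hnd, hiff⟩ := h
  refine ⟨l.length, ⟨?_⟩⟩
  refine ⟨⟨fun x => ⟨l.idxOf x.1, List.idxOf_lt_length_iff.2 x.2⟩,
          fun i => ⟨l.get i, List.get_mem _ _⟩,
          fun x => Subtype.ext (List.idxOf_get _),
          fun i => Fin.ext (List.get_idxOf hnd i)⟩, ?_⟩
  intro a b
  simp only [Equiv.coe_fn_mk, pathGraph_adj, comap_adj, Function.Embedding.coe_subtype]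
  have ha := (List.idxOf_get (List.idxOf_lt_length_iff.2 a.2) : l.get _ = a.1)
  have hb := (List.idxOf_get (List.idxOf_lt_length_iff.2 b.2) : l.get _ = b.1)
  conv_rhs => rw [← ha, ← hb]
  rw [hiff]


lemma forcing_chains_main {V : Type*} {G : SimpleGraph V} [DecidableEq V] :
    ∀ {L : List (V × V)} {S : Set V}, ValidForcingSeq G S L →
      S ∪ {w : V | ∃ u : V, (u, w) ∈ L} = Set.univ →
      ∃ chains : S → List V,
        (∀ r : S, (chains r).head? = some (r : V)) ∧
        (∀ r : S, List.Chain' (fun a b => (a, b) ∈ L) (chains r)) ∧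
        (∀ r : S, IsIP G (chains r)) ∧
        (∀ x : V, ∃! r : S, x ∈ chains r) := by
  intro L
  induction L with
  | nil =>
    intro S _ hcomp
    have hSuniv : S = Set.univ := by
      rw [← hcomp]; ext x; simp
    refine ⟨fun r => [(r : V)], fun r => rfl, fun r => List.isChain_singleton _,
      fun r => isIP_singleton G _, ?_⟩
    intro x
    have hx : x ∈ S := hSuniv ▸ Set.mem_univ x
    refine ⟨⟨x, hx⟩, by simp, ?_⟩
    rintro ⟨y, hy⟩ hmem
    simp only [List.mem_singleton] at hmem
    exact Subtype.ext hmem.symm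
  | cons a rest ih =>
    obtain ⟨u, w⟩ := a
    intro S hv hcomp
    obtain ⟨hu, hw, hadj, hoth, hrest⟩ := hv
    have hcomp' : (insert w S) ∪ {x : V | ∃ u : V, (u, x) ∈ rest} = Set.univ := by
      ext x
      simp only [Set.mem_union, Set.mem_insert_iff, Set.mem_setOf_eq, Set.mem_univ, iff_true]
      have := Set.eq_univ_iff_forall.1 hcomp x
      simp only [Set.mem_union, Set.mem_setOf_eq, List.mem_cons, Prod.mk.injEq] at this
      rcases this with h | ⟨a, h | h⟩
      · exact Or.inl (Or.inr h)
      · exact Or.inl (Or.inl h.2)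
      · exact Or.inr ⟨a, h⟩
    obtain ⟨chains', hhead', hchain', hip', huniq'⟩ := ih hrest hcomp'
    have hwmem : w ∈ insert w S := Set.mem_insert _ _
    have humem : u ∈ insert w S := Set.mem_insert_iff.2 (Or.inr hu)
    have huw : u ≠ w := hadj.ne
    -- elements of a chain are its head or targets of rest
    have helem : ∀ (r : ↥(insert w S)) (b : V), b ∈ chains' r →
        b = (r : V) ∨ b ∉ insert w S := by
      intro r b hb
      rcases chain'_mem (hchain' r) b hb with h | ⟨a, ha⟩
      · left
        rw [hhead' r] at h
        have h2 : (r : V) = b := by simpa using h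
        exact h2.symm
      · right
        exact vfs_snd_not_mem hrest (a, b) ha
    -- chains' u = [u]
    have hcu : chains' ⟨u, humem⟩ = [u] := by
      have hNu : ∀ x, G.Adj u x → x ∈ insert w S := by
        intro x hx
        by_cases hxw : x = w
        · exact hxw ▸ Set.mem_insert _ _
        · exact Set.mem_insert_iff.2 (Or.inr (hoth x hx hxw))
      have hne := vfs_fst_ne hrest hNu
      cases hl : chains' ⟨u, humem⟩ with
      | nil => have h0 := hhead' ⟨u, humem⟩; rw [hl] at h0; simp at h0
      | cons z tt =>
        have hz : z = u := by
          have h0 := hhead' ⟨u, humem⟩; rw [hl] at h0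
          simp only [List.head?_cons, Option.some.injEq] at h0
          exact h0
        cases tt with
        | nil => rw [hz]
        | cons y tt' =>
          exfalso
          have hch := hchain' ⟨u, humem⟩
          rw [hl, hz] at hch
          exact hne (u, y) hch.rel_head rfl
    -- name cw, get its head form
    obtain ⟨cw, hcw⟩ : ∃ l, chains' ⟨w, hwmem⟩ = l := ⟨_, rfl⟩
    have hcwhead : cw.head? = some w := by rw [← hcw]; exact hhead' ⟨w, hwmem⟩
    obtain ⟨tw, hcweq⟩ : ∃ tw, cw = w :: tw := by
      cases h : cw with
      | nil => rw [h] at hcwhead; simp at hcwhead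
      | cons z tt =>
        rw [h] at hcwhead
        simp only [List.head?_cons, Option.some.injEq] at hcwhead
        exact ⟨tt, by rw [hcwhead]⟩
    subst hcweq
    have hcwnd : (w :: tw).Nodup := by
      have := (hip' ⟨w, hwmem⟩).1; rwa [hcw] at this
    have htw : ∀ b ∈ tw, b ∉ insert w S := by
      intro b hb
      have hbmem : b ∈ chains' ⟨w, hwmem⟩ := by
        rw [hcw]; exact List.mem_cons_of_mem _ hb
      rcases helem ⟨w, hwmem⟩ b hbmem with h | h
      · have hbw : b = w := h
        exact absurd (hbw ▸ hb) (List.nodup_cons.1 hcwnd).1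
      · exact h
    -- the new chains
    refine ⟨fun r => if (r : V) = u then u :: w :: tw else chains' ⟨(r : V), Or.inr r.2⟩,
      ?_, ?_, ?_, ?_⟩
    · intro r
      dsimp only
      by_cases h : (r : V) = u
      · rw [if_pos h, h]; rfl
      · rw [if_neg h]; exact hhead' _
    · intro r
      dsimp only
      by_cases h : (r : V) = u
      · rw [if_pos h]
        rw [List.Chain', List.isChain_cons_cons]
        constructor
        · exact List.mem_cons_self
        · have := hchain' ⟨w, hwmem⟩
          rw [hcw] at this
          exact this.imp fun a b hab => List.mem_cons_of_mem _ hab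
      · rw [if_neg h]
        exact (hchain' _).imp fun a b hab => List.mem_cons_of_mem _ hab
    · intro r
      dsimp only
      by_cases h : (r : V) = u
      · rw [if_pos h]
        refine IsIP.cons (hcw ▸ hip' ⟨w, hwmem⟩) ?_ hadj ?_
        · intro hmem
          rcases List.mem_cons.1 hmem with h' | h'
          · exact huw h'
          · exact htw u h' humem
        · intro x hx hAx
          by_cases hxw : x = w
          · exact (List.nodup_cons.1 hcwnd).1 (hxw ▸ hx)
          · exact htw x hx (Set.mem_insert_iff.2 (Or.inr (hoth x hAx hxw)))
      · rw [if_neg h]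
        exact hip' _
    · intro x
      obtain ⟨r', hr'mem, hr'uniq⟩ := huniq' x
      have hdisj : ∀ (a b : ↥(insert w S)), x ∈ chains' a → x ∈ chains' b → a = b :=
        fun a b ha hb => (hr'uniq a ha).trans (hr'uniq b hb).symm
      -- reduce membership in new chains to membership in old chains
      have key : ∀ (y : V) (hy : y ∈ S),
          x ∈ (if y = u then u :: w :: tw else chains' ⟨y, Or.inr hy⟩) →
          (y = u ∧ (x = u ∨ x ∈ chains' ⟨w, hwmem⟩)) ∨
            (y ≠ u ∧ x ∈ chains' ⟨y, Or.inr hy⟩) := by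
        intro y hy hxy
        by_cases hyu : y = u
        · rw [if_pos hyu] at hxy
          refine Or.inl ⟨hyu, ?_⟩
          rcases List.mem_cons.1 hxy with h | h
          · exact Or.inl h
          · exact Or.inr (by rw [hcw]; exact h)
        · rw [if_neg hyu] at hxy
          exact Or.inr ⟨hyu, hxy⟩
      -- x = u implies x ∈ chains' u
      have hxu_mem : x = u → x ∈ chains' ⟨u, humem⟩ := by
        intro h; rw [hcu]; simp [h]
      -- uniqueness helper
      have hmem_char : ∀ (s s' : S),
          x ∈ (if (s : V) = u then u :: w :: tw else chains' ⟨(s : V), Or.inr s.2⟩) →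
          x ∈ (if (s' : V) = u then u :: w :: tw else chains' ⟨(s' : V), Or.inr s'.2⟩) →
          s = s' := by
        rintro ⟨s, hs⟩ ⟨s', hs'⟩ hxs hxs'
        rcases key s hs hxs with ⟨hsu, hxin⟩ | ⟨hsu, hxin⟩ <;>
          rcases key s' hs' hxs' with ⟨hsu', hxin'⟩ | ⟨hsu', hxin'⟩
        · exact Subtype.ext (hsu.trans hsu'.symm)
        · exfalso
          rcases hxin with hxu | hxcw
          · have heq := hdisj _ _ (hxu_mem hxu) hxin'
            replace heq := Subtype.mk.inj heq
            exact hsu' heq.symm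
          · have heq := hdisj _ _ hxcw hxin'
            replace heq := Subtype.mk.inj heq
            exact hw (heq ▸ hs')
        · exfalso
          rcases hxin' with hxu | hxcw
          · have heq := hdisj _ _ (hxu_mem hxu) hxin
            replace heq := Subtype.mk.inj heq
            exact hsu heq.symm
          · have heq := hdisj _ _ hxcw hxin
            replace heq := Subtype.mk.inj heq
            exact hw (heq ▸ hs)
        · have heq := hdisj _ _ hxin hxin'
          replace heq := Subtype.mk.inj heq
          exact Subtype.ext heq
      -- existence
      have hex : ∃ r : S,
          x ∈ (if (r : V) = u then u :: w :: tw else chains' ⟨(r : V), Or.inr r.2⟩) := by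
        obtain ⟨rv, hrv⟩ := r'
        rcases Set.mem_insert_iff.1 hrv with hrw | hrS
        · refine ⟨⟨u, hu⟩, ?_⟩
          rw [if_pos rfl]
          refine List.mem_cons_of_mem _ ?_
          rw [← hcw]
          rw [show (⟨w, hwmem⟩ : ↥(insert w S)) = ⟨rv, hrv⟩ from Subtype.ext hrw.symm]
          exact hr'mem
        · by_cases hru : rv = u
          · refine ⟨⟨u, hu⟩, ?_⟩
            rw [if_pos rfl]
            have hmem : x ∈ chains' ⟨u, humem⟩ := by
              rw [show (⟨u, humem⟩ : ↥(insert w S)) = ⟨rv, hrv⟩ from Subtype.ext hru.symm]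
              exact hr'mem
            rw [hcu] at hmem
            simp only [List.mem_singleton] at hmem
            rw [hmem]
            exact List.mem_cons_self
          · refine ⟨⟨rv, hrS⟩, ?_⟩
            rw [if_neg hru]
            exact hr'mem
      obtain ⟨r, hr⟩ := hex
      exact ⟨r, hr, fun s' hs' => hmem_char s' r hs' hr⟩


theorem forcing_chains_partition {V : Type*} [Fintype V] (G : SimpleGraph V)
    (R : Set V) (L : List (V × V)) (hvalid : ValidForcingSeq G R L)
    (hcomplete : R ∪ {w : V | ∃ u : V, (u, w) ∈ L} = Set.univ) :
    (L.map Prod.fst).Nodup ∧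
      ∃ chains : R → List V,
        (∀ r : R, (chains r).head? = some (r : V)) ∧
        (∀ r : R, List.Chain' (fun a b => (a, b) ∈ L) (chains r)) ∧
        (∀ r : R, (G.induce {x : V | x ∈ chains r}).IsPathGraph) ∧
        (∀ x : V, ∃! r : R, x ∈ chains r) := by
  classical
  refine ⟨vfs_fst_nodup hvalid, ?_⟩
  obtain ⟨chains, h1, h2, h3, h4⟩ := forcing_chains_main hvalid hcomplete
  exact ⟨chains, h1, h2, fun r => (h3 r).isPathGraph, h4⟩
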